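/- arXiv:2412.07287 — 4 statements merged into one kernel-verified Lean document; each statement's English description precedes it below -/
import Mathlib

section
/- Fix v ∈ ℝ³, a unit vector ξ ∈ ℝ³, θ ∈ (0, π/2) and R > 0. Let D = { v* ∈ ℝ³ : v* ≠ v and |⟨(v − v*)/|v − v*|, ξ⟩| > cos θ }. Then the Lebesgue measure of D ∩ { |v*| ≤ R } is at most 2π R (|v| + R)² tan²θ. -/
open MeasureTheory

open Real in
theorem disk_vol (c : EuclideanSpace ℝ (Fin 2)) (ρ : ℝ) (hρ : 0 ≤ ρ) :
    volume {y : Fin 2 → ℝ | (y 0 - c 0) ^ 2 + (y 1 - c 1) ^ 2 ≤ ρ ^ 2}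
      = ENNReal.ofReal ρ ^ 2 * ENNReal.ofReal π := by
  have hDm : MeasurableSet {y : Fin 2 → ℝ | (y 0 - c 0) ^ 2 + (y 1 - c 1) ^ 2 ≤ ρ ^ 2} := by
    have : Measurable fun y : Fin 2 → ℝ => (y 0 - c 0) ^ 2 + (y 1 - c 1) ^ 2 :=
      (((measurable_pi_apply 0).sub measurable_const).pow_const 2).add
        (((measurable_pi_apply 1).sub measurable_const).pow_const 2)
    exact measurableSet_le this measurable_const
  have hset : (⇑(MeasurableEquiv.toLp 2 (Fin 2 → ℝ)).symm ⁻¹'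
        {y : Fin 2 → ℝ | (y 0 - c 0) ^ 2 + (y 1 - c 1) ^ 2 ≤ ρ ^ 2})
      = Metric.closedBall c ρ := by
    ext y
    rw [Set.mem_preimage, Metric.mem_closedBall, EuclideanSpace.dist_eq, Fin.sum_univ_two,
      show ρ = Real.sqrt (ρ ^ 2) from (Real.sqrt_sq hρ).symm,
      Real.sqrt_le_sqrt_iff (by positivity), Real.sqrt_sq hρ]
    simp only [Set.mem_setOf_eq, Real.dist_eq, sq_abs]
    exact Iff.rfl
  rw [← (EuclideanSpace.volume_preserving_symm_measurableEquiv_toLp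
      (Fin 2)).measure_preimage hDm.nullMeasurableSet, hset,
    EuclideanSpace.volume_closedBall]
  congr 1
  rw [show Fintype.card (Fin 2) = 2 from rfl,
    show ((2:ℕ):ℝ) / 2 + 1 = 2 by norm_num, Real.Gamma_two, Real.sq_sqrt pi_pos.le, div_one]

open Real in
theorem slab_vol (a1 a2 R ρ : ℝ) (hρ : 0 ≤ ρ) :
    volume {x : EuclideanSpace ℝ (Fin 3) |
        x 0 ∈ Set.Icc (-R) R ∧ (x 1 - a1) ^ 2 + (x 2 - a2) ^ 2 ≤ ρ ^ 2}
      = ENNReal.ofReal (2 * R) * (ENNReal.ofReal ρ ^ 2 * ENNReal.ofReal π) := by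
  have hDm : MeasurableSet {y : Fin 2 → ℝ | (y 0 - a1) ^ 2 + (y 1 - a2) ^ 2 ≤ ρ ^ 2} := by
    have : Measurable fun y : Fin 2 → ℝ => (y 0 - a1) ^ 2 + (y 1 - a2) ^ 2 :=
      (((measurable_pi_apply 0).sub measurable_const).pow_const 2).add
        (((measurable_pi_apply 1).sub measurable_const).pow_const 2)
    exact measurableSet_le this measurable_const
  have h1 : volume {x : EuclideanSpace ℝ (Fin 3) |
        x 0 ∈ Set.Icc (-R) R ∧ (x 1 - a1) ^ 2 + (x 2 - a2) ^ 2 ≤ ρ ^ 2}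
      = volume {x : Fin 3 → ℝ |
        x 0 ∈ Set.Icc (-R) R ∧ (x 1 - a1) ^ 2 + (x 2 - a2) ^ 2 ≤ ρ ^ 2} := by
    rw [← (EuclideanSpace.volume_preserving_symm_measurableEquiv_toLp (Fin 3)).measure_preimage]
    · rfl
    · apply MeasurableSet.nullMeasurableSet
      apply MeasurableSet.inter
      · exact measurableSet_Icc.preimage (measurable_pi_apply 0)
      · have : Measurable fun x : Fin 3 → ℝ => (x 1 - a1) ^ 2 + (x 2 - a2) ^ 2 :=
          (((measurable_pi_apply 1).sub measurable_const).pow_const 2).add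
            (((measurable_pi_apply 2).sub measurable_const).pow_const 2)
        exact measurableSet_le this measurable_const
  have h2 : {x : Fin 3 → ℝ | x 0 ∈ Set.Icc (-R) R ∧ (x 1 - a1) ^ 2 + (x 2 - a2) ^ 2 ≤ ρ ^ 2}
      = (MeasurableEquiv.piFinSuccAbove (fun _ : Fin 3 => ℝ) 0) ⁻¹'
        (Set.Icc (-R) R ×ˢ {y : Fin 2 → ℝ | (y 0 - a1) ^ 2 + (y 1 - a2) ^ 2 ≤ ρ ^ 2}) := by
    ext x
    simp only [Set.mem_setOf_eq, Set.mem_preimage, MeasurableEquiv.piFinSuccAbove_apply,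
      Set.mem_prod, Fin.removeNth]
    constructor
    · rintro ⟨hx1, hx2⟩; exact ⟨hx1, by simpa [Fin.succAbove, Fin.tail] using hx2⟩
    · rintro ⟨hx1, hx2⟩; exact ⟨hx1, by simpa [Fin.succAbove, Fin.tail] using hx2⟩
  have h3 := (measurePreserving_piFinSuccAbove (fun _ : Fin 3 => (volume : Measure ℝ))
      0).measure_preimage
    (s := Set.Icc (-R) R ×ˢ {y : Fin 2 → ℝ | (y 0 - a1) ^ 2 + (y 1 - a2) ^ 2 ≤ ρ ^ 2})
    ((measurableSet_Icc.prod hDm).nullMeasurableSet)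
  have hd := disk_vol (WithLp.toLp 2 ![a1, a2]) ρ hρ
  simp only [WithLp.ofLp_toLp, Matrix.cons_val_zero, Matrix.cons_val_one, Matrix.head_cons] at hd
  rw [h1, h2, volume_pi, h3, Measure.prod_prod, Real.volume_Icc, ← volume_pi, hd,
    show R - -R = 2 * R by ring]

open Real in
/-- The part of the two-sided cone with vertex `v`, axis `ξ` and half-angle `θ`
lying in the ball `{|w| ≤ R}` has Lebesgue measure at most `2πR(|v|+R)² tan²θ`. -/
theorem stmt_2 (v ξ : EuclideanSpace ℝ (Fin 3)) (hξ : ‖ξ‖ = 1) (θ R : ℝ)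
    (hθ : θ ∈ Set.Ioo 0 (Real.pi / 2)) (hR : 0 < R) :
    volume ({w : EuclideanSpace ℝ (Fin 3) | w ≠ v ∧
        Real.cos θ < |(inner ℝ (‖v - w‖⁻¹ • (v - w) : EuclideanSpace ℝ (Fin 3)) ξ : ℝ)|} ∩
      {w : EuclideanSpace ℝ (Fin 3) | ‖w‖ ≤ R}) ≤
      ENNReal.ofReal (2 * Real.pi * R * (‖v‖ + R) ^ 2 * Real.tan θ ^ 2) := by
  obtain ⟨hθ0, hθ2⟩ := hθ
  have hcos : 0 < Real.cos θ :=
    Real.cos_pos_of_mem_Ioo ⟨by linarith [Real.pi_pos], hθ2⟩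
  have hsin : 0 ≤ Real.sin θ :=
    Real.sin_nonneg_of_nonneg_of_le_pi hθ0.le (by linarith [Real.pi_pos])
  have htan : 0 ≤ Real.tan θ := by
    rw [Real.tan_eq_sin_div_cos]; exact div_nonneg hsin hcos.le
  have hsintan : Real.sin θ ≤ Real.tan θ := by
    rw [Real.tan_eq_sin_div_cos, le_div_iff₀ hcos]
    nlinarith [Real.cos_le_one θ]
  -- orthonormal basis with first vector ξ
  obtain ⟨b, hb0⟩ : ∃ b : OrthonormalBasis (Fin 3) ℝ (EuclideanSpace ℝ (Fin 3)), b 0 = ξ := by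
    have card : Module.finrank ℝ (EuclideanSpace ℝ (Fin 3)) = Fintype.card (Fin 3) := by simp
    have horth : Orthonormal ℝ (({0} : Set (Fin 3)).restrict ![ξ, 0, 0]) := by
      rw [orthonormal_iff_ite]
      rintro ⟨i, hi⟩ ⟨j, hj⟩
      simp only [Set.mem_singleton_iff] at hi hj
      subst hi; subst hj
      have := real_inner_self_eq_norm_sq ξ
      rw [hξ] at this
      change inner ℝ ξ ξ = _
      simpa [PiLp.inner_apply] using this.trans (one_pow 2)
    obtain ⟨b, hb⟩ := horth.exists_orthonormalBasis_extension_of_card_eq card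
    exact ⟨b, by simpa using hb 0 rfl⟩
  set f := b.repr with hf
  set a := f v with ha
  set ρ := (‖v‖ + R) * Real.tan θ with hρdef
  have hρ : 0 ≤ ρ := mul_nonneg (by positivity) htan
  set A : Set (EuclideanSpace ℝ (Fin 3)) :=
    {x | x 0 ∈ Set.Icc (-R) R ∧ (x 1 - a 1) ^ 2 + (x 2 - a 2) ^ 2 ≤ ρ ^ 2} with hA
  have hcoord : ∀ i, Measurable fun x : EuclideanSpace ℝ (Fin 3) => x i := fun i =>
    (measurable_pi_apply i).comp (MeasurableEquiv.toLp 2 (Fin 3 → ℝ)).symm.measurable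
  have hAm : MeasurableSet A := by
    apply MeasurableSet.inter
    · exact measurableSet_Icc.preimage (hcoord 0)
    · have : Measurable fun x : EuclideanSpace ℝ (Fin 3) =>
          (x 1 - a 1) ^ 2 + (x 2 - a 2) ^ 2 :=
        (((hcoord 1).sub measurable_const).pow_const 2).add
          (((hcoord 2).sub measurable_const).pow_const 2)
      exact measurableSet_le this measurable_const
  -- containment
  have hsub : ({w : EuclideanSpace ℝ (Fin 3) | w ≠ v ∧
        Real.cos θ < |(inner ℝ (‖v - w‖⁻¹ • (v - w) : EuclideanSpace ℝ (Fin 3)) ξ : ℝ)|} ∩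
      {w : EuclideanSpace ℝ (Fin 3) | ‖w‖ ≤ R}) ⊆ ⇑f ⁻¹' A := by
    rintro w ⟨⟨hwv, hcone⟩, hwR⟩
    have hwR' : ‖w‖ ≤ R := hwR
    set u : EuclideanSpace ℝ (Fin 3) := v - w with hu
    have hu0 : u ≠ 0 := sub_ne_zero.mpr (Ne.symm hwv)
    have hun : 0 < ‖u‖ := norm_pos_iff.mpr hu0
    set t : ℝ := inner ℝ u ξ with ht
    -- the cone condition
    have hcone' : ‖u‖ * Real.cos θ < |t| := by
      have : |(inner ℝ (‖v - w‖⁻¹ • (v - w) : EuclideanSpace ℝ (Fin 3)) ξ : ℝ)|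
          = ‖u‖⁻¹ * |t| := by
        rw [show ((v : EuclideanSpace ℝ (Fin 3)) - w) = u from rfl, real_inner_smul_left,
          abs_mul, abs_inv, abs_norm]
      rw [this, inv_mul_eq_div, lt_div_iff₀ hun] at hcone
      linarith [hcone]
    have hfu0 : f u 0 = t := by
      rw [hf, b.repr_apply_apply, hb0, real_inner_comm]
    have hnorm : (f u 0) ^ 2 + (f u 1) ^ 2 + (f u 2) ^ 2 = ‖u‖ ^ 2 := by
      have h1 : ‖(f u : EuclideanSpace ℝ (Fin 3))‖ = ‖u‖ := f.norm_map u
      rw [← h1, EuclideanSpace.norm_eq, Real.sq_sqrt (by positivity)]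
      simp [Fin.sum_univ_three, sq_abs]
    have huvR : ‖u‖ ≤ ‖v‖ + R :=
      (norm_sub_le v w).trans (by linarith)
    have ht2 : ‖u‖ ^ 2 * Real.cos θ ^ 2 ≤ t ^ 2 := by
      nlinarith [sq_abs t, mul_nonneg hun.le hcos.le]
    have hperp : (f u 1) ^ 2 + (f u 2) ^ 2 ≤ ρ ^ 2 := by
      have hpyth := Real.sin_sq_add_cos_sq θ
      rw [hfu0] at hnorm
      have h2 : (f u 1) ^ 2 + (f u 2) ^ 2 ≤ ‖u‖ ^ 2 * Real.sin θ ^ 2 := by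
        nlinarith [hnorm, ht2, hpyth, sq_nonneg ‖u‖]
      have h3 : ‖u‖ ^ 2 * Real.sin θ ^ 2 ≤ (‖v‖ + R) ^ 2 * Real.tan θ ^ 2 := by
        have h4 : ‖u‖ * Real.sin θ ≤ (‖v‖ + R) * Real.tan θ :=
          mul_le_mul huvR hsintan hsin (by positivity)
        have h5 : (‖u‖ * Real.sin θ) ^ 2 ≤ ((‖v‖ + R) * Real.tan θ) ^ 2 :=
          pow_le_pow_left₀ (mul_nonneg (norm_nonneg _) hsin) h4 2
        calc ‖u‖ ^ 2 * Real.sin θ ^ 2 = (‖u‖ * Real.sin θ) ^ 2 := by ring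
          _ ≤ ((‖v‖ + R) * Real.tan θ) ^ 2 := h5
          _ = (‖v‖ + R) ^ 2 * Real.tan θ ^ 2 := by ring
      calc (f u 1) ^ 2 + (f u 2) ^ 2 ≤ ‖u‖ ^ 2 * Real.sin θ ^ 2 := h2
        _ ≤ (‖v‖ + R) ^ 2 * Real.tan θ ^ 2 := h3
        _ = ρ ^ 2 := by rw [hρdef]; ring
    refine ⟨?_, ?_⟩
    · -- first coordinate in Icc
      have h0 : f w 0 = inner ℝ ξ w := by rw [hf, b.repr_apply_apply, hb0]
      rw [Set.mem_Icc, ← abs_le, h0]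
      calc |(inner ℝ ξ w : ℝ)| ≤ ‖ξ‖ * ‖w‖ := abs_real_inner_le_norm ξ w
        _ ≤ R := by rw [hξ, one_mul]; exact hwR'
    · -- perpendicular part in the disk
      have hfu : ∀ i, f u i = a i - f w i := by
        intro i
        rw [hu, map_sub]
        rfl
      have e1 : (f w 1 - a 1) ^ 2 = (f u 1) ^ 2 := by rw [hfu 1]; ring
      have e2 : (f w 2 - a 2) ^ 2 = (f u 2) ^ 2 := by rw [hfu 2]; ring
      rw [e1, e2]
      exact hperp
  calc volume ({w : EuclideanSpace ℝ (Fin 3) | w ≠ v ∧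
        Real.cos θ < |(inner ℝ (‖v - w‖⁻¹ • (v - w) : EuclideanSpace ℝ (Fin 3)) ξ : ℝ)|} ∩
      {w : EuclideanSpace ℝ (Fin 3) | ‖w‖ ≤ R})
      ≤ volume (⇑f ⁻¹' A) := measure_mono hsub
    _ = volume A := b.measurePreserving_repr.measure_preimage hAm.nullMeasurableSet
    _ = ENNReal.ofReal (2 * R) * (ENNReal.ofReal ρ ^ 2 * ENNReal.ofReal π) :=
        slab_vol (a 1) (a 2) R ρ hρ
    _ = ENNReal.ofReal (2 * Real.pi * R * (‖v‖ + R) ^ 2 * Real.tan θ ^ 2) := by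
        rw [← ENNReal.ofReal_pow hρ, ← ENNReal.ofReal_mul (by positivity),
          ← ENNReal.ofReal_mul (by positivity)]
        congr 1
        rw [hρdef]
        ring
end

section
/- Let g : ℝ³ → [0, ∞) be measurable with ∫ g ≥ δ > 0, ∫ g(v)(1+|v|²) dv ≤ λ, and ∫ g log(1 + g) dv ≤ λ. Then there is a constant c = c(δ, λ) > 0 such that for every v ∈ ℝ³, ∫_{ℝ³} |v − v*|⁻¹ g(v*) dv* ≥ c (1 + |v|²)^{-1/2}. -/
open MeasureTheory

set_option maxHeartbeats 800000 in
/-- Pointwise lower bound on the Coulomb potential of a nonnegative function with mass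
at least `δ`, energy at most `λ` and entropy at most `λ`:
`∫ |v − v*|⁻¹ g(v*) dv* ≥ c(δ,λ) ⟨v⟩⁻¹`. -/
theorem stmt_3 (δ lam : ℝ) (hδ : 0 < δ) :
    ∃ c > (0 : ℝ), ∀ g : EuclideanSpace ℝ (Fin 3) → ℝ,
      Measurable g → (∀ v, 0 ≤ g v) →
      ENNReal.ofReal δ ≤ ∫⁻ v, ENNReal.ofReal (g v) →
      (∫⁻ v, ENNReal.ofReal (g v * (1 + ‖v‖ ^ 2))) ≤ ENNReal.ofReal lam →
      (∫⁻ v, ENNReal.ofReal (g v * Real.log (1 + g v))) ≤ ENNReal.ofReal lam →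
      ∀ v : EuclideanSpace ℝ (Fin 3),
        ENNReal.ofReal (c * (1 + ‖v‖ ^ 2) ^ (-(1 : ℝ) / 2)) ≤
          ∫⁻ w, ENNReal.ofReal (‖v - w‖⁻¹ * g w) := by
  set lam' := max lam δ with hlam'def
  have hlam'pos : 0 < lam' := lt_max_of_lt_right hδ
  set R := Real.sqrt (2 * lam' / δ) with hRdef
  have hR0 : 0 ≤ R := Real.sqrt_nonneg _
  have hRsq : R ^ 2 = 2 * lam' / δ := Real.sq_sqrt (by positivity)
  refine ⟨(δ / 2) * (1 + R)⁻¹, by positivity, ?_⟩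
  intro g hg hg0 hmass henergy _hent
  have henergy' : (∫⁻ w, ENNReal.ofReal (g w * (1 + ‖w‖ ^ 2))) ≤ ENNReal.ofReal lam' :=
    henergy.trans (ENNReal.ofReal_le_ofReal (le_max_left _ _))
  set G : EuclideanSpace ℝ (Fin 3) → ENNReal := fun w => ENNReal.ofReal (g w) with hG
  have hGmeas : Measurable G := ENNReal.measurable_ofReal.comp hg
  set s : Set (EuclideanSpace ℝ (Fin 3)) := {w | R < ‖w‖} with hs
  have hsm : MeasurableSet s := measurableSet_lt measurable_const measurable_norm
  -- tail bound
  have htail : (∫⁻ w in s, G w) * ENNReal.ofReal (1 + R ^ 2) ≤ ENNReal.ofReal lam' := by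
    rw [← lintegral_mul_const _ hGmeas]
    calc ∫⁻ w in s, G w * ENNReal.ofReal (1 + R ^ 2)
        ≤ ∫⁻ w in s, ENNReal.ofReal (g w * (1 + ‖w‖ ^ 2)) := by
          refine setLIntegral_mono (by measurability) ?_
          intro w hw
          have hw' : R < ‖w‖ := hw
          rw [hG, ← ENNReal.ofReal_mul (hg0 w)]
          refine ENNReal.ofReal_le_ofReal ?_
          have : R ^ 2 ≤ ‖w‖ ^ 2 := by nlinarith [norm_nonneg w]
          nlinarith [hg0 w]
      _ ≤ ∫⁻ w, ENNReal.ofReal (g w * (1 + ‖w‖ ^ 2)) := setLIntegral_le_lintegral _ _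
      _ ≤ ENNReal.ofReal lam' := henergy'
  have htail2 : (∫⁻ w in s, G w) ≤ ENNReal.ofReal (δ / 2) := by
    have hb0 : (0 : ℝ) < 1 + R ^ 2 := by positivity
    have hb : ENNReal.ofReal (1 + R ^ 2) ≠ 0 := by
      simp [ENNReal.ofReal_eq_zero, not_le, hb0]
    have hdiv : (∫⁻ w in s, G w) ≤ ENNReal.ofReal lam' / ENNReal.ofReal (1 + R ^ 2) :=
      (ENNReal.le_div_iff_mul_le (Or.inl hb) (Or.inl ENNReal.ofReal_ne_top)).2 htail
    calc (∫⁻ w in s, G w)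
        ≤ ENNReal.ofReal lam' / ENNReal.ofReal (1 + R ^ 2) := hdiv
      _ = ENNReal.ofReal (lam' / (1 + R ^ 2)) := (ENNReal.ofReal_div_of_pos hb0).symm
      _ ≤ ENNReal.ofReal (δ / 2) := by
          refine ENNReal.ofReal_le_ofReal ?_
          rw [div_le_iff₀ hb0]
          have : δ / 2 * (1 + R ^ 2) = δ / 2 + δ / 2 * (2 * lam' / δ) := by rw [hRsq]; ring
          rw [this]
          have h2 : δ / 2 * (2 * lam' / δ) = lam' := by field_simp
          nlinarith
  -- mass in the ball
  have hball : ENNReal.ofReal (δ / 2) ≤ ∫⁻ w in sᶜ, G w := by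
    have hsplit : (∫⁻ w, G w) = (∫⁻ w in s, G w) + ∫⁻ w in sᶜ, G w :=
      (lintegral_add_compl _ hsm).symm
    have h1 : ENNReal.ofReal δ ≤ (∫⁻ w in s, G w) + ∫⁻ w in sᶜ, G w := hsplit ▸ hmass
    have h2 : ENNReal.ofReal δ ≤ ENNReal.ofReal (δ / 2) + ∫⁻ w in sᶜ, G w :=
      h1.trans (add_le_add htail2 le_rfl)
    have hhalf : ENNReal.ofReal δ = ENNReal.ofReal (δ / 2) + ENNReal.ofReal (δ / 2) := by
      rw [← ENNReal.ofReal_add (by positivity) (by positivity)]; ring_nf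
    rw [hhalf] at h2
    exact (ENNReal.add_le_add_iff_left ENNReal.ofReal_ne_top).1 h2
  intro v
  set sv := Real.sqrt (1 + ‖v‖ ^ 2) with hsvdef
  have hsv1 : 1 ≤ sv := by
    nlinarith [Real.sq_sqrt (show (0:ℝ) ≤ 1 + ‖v‖ ^ 2 by positivity),
      Real.sqrt_nonneg (1 + ‖v‖ ^ 2), sq_nonneg ‖v‖]
  have hsvpos : 0 < sv := lt_of_lt_of_le one_pos hsv1
  have hrpow : (1 + ‖v‖ ^ 2) ^ (-(1 : ℝ) / 2) = sv⁻¹ := by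
    rw [neg_div, Real.rpow_neg (by positivity), hsvdef, Real.sqrt_eq_rpow]
  have hvae : ∀ᵐ w : EuclideanSpace ℝ (Fin 3), w ≠ v := by
    rw [ae_iff]
    have : {w : EuclideanSpace ℝ (Fin 3) | ¬ w ≠ v} = {v} := by ext w; simp
    rw [this]
    exact measure_singleton v
  have hmain : ∀ᵐ w ∂(volume.restrict sᶜ),
      ENNReal.ofReal (((1 + R) * sv)⁻¹ * g w) ≤ ENNReal.ofReal (‖v - w‖⁻¹ * g w) := by
    refine (ae_restrict_iff' hsm.compl).2 ?_
    filter_upwards [hvae] with w hw hwin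
    refine ENNReal.ofReal_le_ofReal (mul_le_mul_of_nonneg_right ?_ (hg0 w))
    have hne : 0 < ‖v - w‖ := by
      rw [norm_pos_iff, sub_ne_zero]; exact fun h => hw h.symm
    refine inv_anti₀ hne ?_
    have h1 : ‖v - w‖ ≤ ‖v‖ + ‖w‖ := norm_sub_le _ _
    have h2 : ‖w‖ ≤ R := not_lt.1 hwin
    have h3 : ‖v‖ ≤ sv := by
      have h := Real.sqrt_le_sqrt (show ‖v‖ ^ 2 ≤ 1 + ‖v‖ ^ 2 by nlinarith)
      rwa [Real.sqrt_sq (norm_nonneg v)] at h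
    nlinarith [hR0, hsv1, norm_nonneg w]
  have hinv0 : (0 : ℝ) ≤ ((1 + R) * sv)⁻¹ := by positivity
  calc ENNReal.ofReal ((δ / 2) * (1 + R)⁻¹ * (1 + ‖v‖ ^ 2) ^ (-(1 : ℝ) / 2))
      = ENNReal.ofReal (((1 + R) * sv)⁻¹) * ENNReal.ofReal (δ / 2) := by
        rw [← ENNReal.ofReal_mul hinv0]
        congr 1
        rw [hrpow, mul_inv]
        ring
    _ ≤ ENNReal.ofReal (((1 + R) * sv)⁻¹) * ∫⁻ w in sᶜ, G w := mul_le_mul_right hball _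
    _ = ∫⁻ w in sᶜ, ENNReal.ofReal (((1 + R) * sv)⁻¹ * g w) := by
        rw [← lintegral_const_mul _ hGmeas]
        refine lintegral_congr fun w => ?_
        rw [hG, ENNReal.ofReal_mul hinv0]
    _ ≤ ∫⁻ w in sᶜ, ENNReal.ofReal (‖v - w‖⁻¹ * g w) := lintegral_mono_ae hmain
    _ ≤ ∫⁻ w, ENNReal.ofReal (‖v - w‖⁻¹ * g w) := setLIntegral_le_lintegral _ _
end

section
/- Let g : ℝ³ → [0, ∞) be measurable with ∫ g ≥ δ > 0, ∫ g(v)(1+|v|²) dv ≤ λ, and ∫ g log(1+g) dv ≤ λ. Then there is a constant c = c(δ, λ) > 0 such that for every v ∈ ℝ³ and every unit vector ξ ∈ ℝ³, ∑_{i,j} (a_{ij} * g)(v) ξ_i ξ_j ≥ c (1 + |v|²)^{-3/2}, where a(z) = |z|⁻¹ (Id − z⊗z/|z|²) for z ≠ 0. -/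
open MeasureTheory

local notation "E3" => EuclideanSpace ℝ (Fin 3)

lemma quad_eq (z ξ : E3) :
    (∑ i, ∑ j, (‖z‖⁻¹ * ((if i = j then (1 : ℝ) else 0) -
        z i * z j / ‖z‖ ^ 2)) * ξ i * ξ j)
      = ‖z‖⁻¹ * (‖ξ‖ ^ 2 - (inner ℝ z ξ : ℝ) ^ 2 / ‖z‖ ^ 2) := by
  simp only [← real_inner_self_eq_norm_sq]
  simp only [PiLp.inner_apply, RCLike.inner_apply, conj_trivial, Fin.sum_univ_three,
    show ((0:Fin 3) = 1) = False by simp, show ((0:Fin 3) = 2) = False by simp,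
    show ((1:Fin 3) = 0) = False by simp, show ((1:Fin 3) = 2) = False by decide,
    show ((2:Fin 3) = 0) = False by simp, show ((2:Fin 3) = 1) = False by decide,
    if_true, if_false, eq_self_iff_true]
  ring

lemma perp_sq (z ξ : E3) (hξ : ‖ξ‖ = 1) :
    ‖z - (inner ℝ z ξ : ℝ) • ξ‖ ^ 2 = ‖z‖ ^ 2 - (inner ℝ z ξ : ℝ) ^ 2 := by
  rw [norm_sub_sq_real, real_inner_smul_right, norm_smul, Real.norm_eq_abs, hξ, mul_pow, sq_abs]
  ring

lemma quad_ge (v w ξ : E3) (hξ : ‖ξ‖ = 1) (ρ R : ℝ) (hρ : 0 < ρ)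
    (hw : ‖w‖ ≤ R) (hd : ρ ≤ ‖(v - w) - (inner ℝ (v - w) ξ : ℝ) • ξ‖) :
    ρ ^ 2 / (‖v‖ + R) ^ 3 ≤
      ∑ i, ∑ j, (‖v - w‖⁻¹ * ((if i = j then (1 : ℝ) else 0) -
        (v - w) i * (v - w) j / ‖v - w‖ ^ 2)) * ξ i * ξ j := by
  set z := v - w with hz
  set s : ℝ := inner ℝ z ξ with hs
  have hperp : ‖z - s • ξ‖ ^ 2 = ‖z‖ ^ 2 - s ^ 2 := perp_sq z ξ hξ
  have hpz : ‖z - s • ξ‖ ≤ ‖z‖ := by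
    have h2 : ‖z - s • ξ‖ ^ 2 ≤ ‖z‖ ^ 2 := by rw [hperp]; nlinarith [sq_nonneg s]
    exact le_of_sq_le_sq h2 (norm_nonneg z)
  have hzρ : ρ ≤ ‖z‖ := hd.trans hpz
  have hznorm : 0 < ‖z‖ := lt_of_lt_of_le hρ hzρ
  have hzR : ‖z‖ ≤ ‖v‖ + R := by
    calc ‖z‖ ≤ ‖v‖ + ‖w‖ := norm_sub_le v w
    _ ≤ ‖v‖ + R := by linarith
  rw [quad_eq z ξ, hξ]
  have hne : ‖z‖ ≠ 0 := ne_of_gt hznorm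
  have h2 : (‖z‖ ^ 2 - s ^ 2) / ‖z‖ ^ 2 = 1 - s ^ 2 / ‖z‖ ^ 2 := by
    rw [sub_div, div_self (pow_ne_zero 2 hne)]
  have key : ‖z‖⁻¹ * (1 ^ 2 - s ^ 2 / ‖z‖ ^ 2) = ‖z - s • ξ‖ ^ 2 / ‖z‖ ^ 3 := by
    rw [hperp, one_pow, ← h2, inv_mul_eq_div, div_div, ← pow_succ]
  rw [key]
  exact div_le_div₀ (sq_nonneg _) (pow_le_pow_left₀ hρ.le hd 2) (pow_pos hznorm 3)
    (pow_le_pow_left₀ hznorm.le hzR 3)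

lemma tail_mass (g : E3 → ℝ) (lam R : ℝ) (hR : 0 < R)
    (hE : (∫⁻ v, ENNReal.ofReal (g v * (1 + ‖v‖ ^ 2))) ≤ ENNReal.ofReal lam) :
    ∫⁻ w in {w : E3 | R < ‖w‖}, ENNReal.ofReal (g w)
      ≤ ENNReal.ofReal lam / ENNReal.ofReal (R ^ 2) := by
  have hS : MeasurableSet {w : E3 | R < ‖w‖} :=
    measurableSet_lt measurable_const (continuous_norm.measurable)
  rw [ENNReal.le_div_iff_mul_le (Or.inl (by simp [ENNReal.ofReal_pos]; positivity))
    (Or.inl ENNReal.ofReal_ne_top)]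
  calc (∫⁻ w in {w : E3 | R < ‖w‖}, ENNReal.ofReal (g w)) * ENNReal.ofReal (R ^ 2)
      = ∫⁻ w in {w : E3 | R < ‖w‖}, ENNReal.ofReal (g w) * ENNReal.ofReal (R ^ 2) :=
        (lintegral_mul_const' _ _ ENNReal.ofReal_ne_top).symm
    _ ≤ ∫⁻ w in {w : E3 | R < ‖w‖}, ENNReal.ofReal (g w * (1 + ‖w‖ ^ 2)) := by
        apply setLIntegral_mono' hS
        intro w hw
        rcases le_or_gt 0 (g w) with hgw | hgw
        · rw [← ENNReal.ofReal_mul hgw]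
          apply ENNReal.ofReal_le_ofReal
          have h1 : R ^ 2 ≤ 1 + ‖w‖ ^ 2 := by
            have := hw.out
            nlinarith [norm_nonneg w]
          exact mul_le_mul_of_nonneg_left h1 hgw
        · simp [ENNReal.ofReal_eq_zero.mpr hgw.le]
    _ ≤ ∫⁻ w, ENNReal.ofReal (g w * (1 + ‖w‖ ^ 2)) := setLIntegral_le_lintegral _ _
    _ ≤ ENNReal.ofReal lam := hE

lemma small_set_mass (g : E3 → ℝ) (hg0 : ∀ v, 0 ≤ g v) (lam K : ℝ) (hK : 0 < K)
    {S : Set E3} (hS : MeasurableSet S)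
    (hH : (∫⁻ v, ENNReal.ofReal (g v * Real.log (1 + g v))) ≤ ENNReal.ofReal lam) :
    ∫⁻ w in S, ENNReal.ofReal (g w)
      ≤ ENNReal.ofReal K * volume S
        + ENNReal.ofReal lam / ENNReal.ofReal (Real.log (1 + K)) := by
  set L := Real.log (1 + K) with hL
  have hLpos : 0 < L := Real.log_pos (by linarith)
  have hpt : ∀ w : E3, ENNReal.ofReal (g w)
      ≤ ENNReal.ofReal K + ENNReal.ofReal (g w * Real.log (1 + g w)) / ENNReal.ofReal L := by
    intro w
    have hgw := hg0 w
    have hlog0 : 0 ≤ Real.log (1 + g w) := Real.log_nonneg (by linarith)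
    have hreal : g w ≤ K + g w * Real.log (1 + g w) / L := by
      rcases le_or_gt (g w) K with h | h
      · have : 0 ≤ g w * Real.log (1 + g w) / L := by positivity
        linarith
      · have hlogK : L ≤ Real.log (1 + g w) := Real.log_le_log (by linarith) (by linarith)
        have h1 : g w * L ≤ g w * Real.log (1 + g w) := mul_le_mul_of_nonneg_left hlogK hgw
        have h2 : g w * L / L ≤ g w * Real.log (1 + g w) / L := by gcongr
        have h3 : g w * L / L = g w := by field_simp
        linarith
    calc ENNReal.ofReal (g w) ≤ ENNReal.ofReal (K + g w * Real.log (1 + g w) / L) :=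
          ENNReal.ofReal_le_ofReal hreal
      _ = ENNReal.ofReal K + ENNReal.ofReal (g w * Real.log (1 + g w) / L) :=
          ENNReal.ofReal_add hK.le (by positivity)
      _ = ENNReal.ofReal K + ENNReal.ofReal (g w * Real.log (1 + g w)) / ENNReal.ofReal L := by
          rw [ENNReal.ofReal_div_of_pos hLpos]
  calc ∫⁻ w in S, ENNReal.ofReal (g w)
      ≤ ∫⁻ w in S, (ENNReal.ofReal K
          + ENNReal.ofReal (g w * Real.log (1 + g w)) / ENNReal.ofReal L) :=
        setLIntegral_mono' hS fun w _ => hpt w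
    _ = ENNReal.ofReal K * volume S
        + ∫⁻ w in S, ENNReal.ofReal (g w * Real.log (1 + g w)) / ENNReal.ofReal L := by
        rw [lintegral_add_left measurable_const, setLIntegral_const]
    _ ≤ ENNReal.ofReal K * volume S
        + ENNReal.ofReal lam / ENNReal.ofReal L := by
        gcongr
        have : ∀ w : E3, ENNReal.ofReal (g w * Real.log (1 + g w)) / ENNReal.ofReal L
            = ENNReal.ofReal (g w * Real.log (1 + g w)) * (ENNReal.ofReal L)⁻¹ := fun w => rfl
        simp_rw [this]
        rw [lintegral_mul_const' _ _ (by simp [ENNReal.inv_ne_top, ENNReal.ofReal_eq_zero]; linarith)]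
        rw [ENNReal.div_eq_inv_mul, mul_comm]
        gcongr
        exact (setLIntegral_le_lintegral _ _).trans hH

lemma box_volume (c r : Fin 3 → ℝ) :
    volume {x : E3 | ∀ i, x i ∈ Set.Icc (c i - r i) (c i + r i)}
      = ∏ i, ENNReal.ofReal (2 * r i) := by
  have hset : {x : E3 | ∀ i, x i ∈ Set.Icc (c i - r i) (c i + r i)}
      = ((MeasurableEquiv.toLp 2 (Fin 3 → ℝ)).symm) ⁻¹'
        (Set.univ.pi fun i => Set.Icc (c i - r i) (c i + r i)) := by
    ext x
    simp only [Set.mem_setOf_eq, Set.mem_preimage, Set.mem_univ_pi]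
    exact Iff.rfl
  rw [hset, (EuclideanSpace.volume_preserving_symm_measurableEquiv_toLp (Fin 3)).measure_preimage
    (MeasurableSet.univ_pi fun i => measurableSet_Icc).nullMeasurableSet]
  rw [volume_pi_pi]
  congr 1
  ext i
  rw [Real.volume_Icc]
  congr 1
  ring

lemma tube_volume (v ξ : E3) (hξ : ‖ξ‖ = 1) (R ρ : ℝ) (hR : 0 ≤ R) (hρ : 0 ≤ ρ) :
    volume {w : E3 | ‖w‖ ≤ R ∧ ‖(v - w) - (inner ℝ (v - w) ξ : ℝ) • ξ‖ < ρ}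
      ≤ ENNReal.ofReal (8 * R * ρ ^ 2) := by
  have hortho : Orthonormal ℝ (Set.restrict {0} (fun _ : Fin 3 => ξ)) := by
    constructor
    · intro i; exact hξ
    · intro i j hij
      exfalso
      apply hij
      have hi := i.2
      have hj := j.2
      simp only [Set.mem_singleton_iff] at hi hj
      exact Subtype.ext (hi.trans hj.symm)
  obtain ⟨b, hb⟩ := hortho.exists_orthonormalBasis_extension_of_card_eq
    (by simp)
  have hb0 : b 0 = ξ := hb 0 rfl
  set c : Fin 3 → ℝ := fun i => if i = 0 then 0 else b.repr v i with hc
  set r : Fin 3 → ℝ := fun i => if i = 0 then R else ρ with hr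
  have hsub : {w : E3 | ‖w‖ ≤ R ∧ ‖(v - w) - (inner ℝ (v - w) ξ : ℝ) • ξ‖ < ρ}
      ⊆ (b.repr : E3 ≃ₗᵢ[ℝ] E3) ⁻¹' {x : E3 | ∀ i, x i ∈ Set.Icc (c i - r i) (c i + r i)} := by
    intro w hw
    obtain ⟨hw1, hw2⟩ := hw
    intro i
    by_cases hi : i = 0
    · subst hi
      simp only [hc, hr, if_pos rfl]
      have : |b.repr w 0| ≤ ‖w‖ := by
        rw [b.repr_apply_apply]
        calc |(inner ℝ (b 0) w : ℝ)| ≤ ‖b 0‖ * ‖w‖ := abs_real_inner_le_norm _ _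
          _ = ‖w‖ := by rw [hb0, hξ, one_mul]
      have h2 := abs_le.mp (this.trans hw1)
      constructor <;> [linarith [h2.1]; linarith [h2.2]]
    · simp only [hc, hr, if_neg hi]
      have hinner : (inner ℝ (b i) ((v - w) - (inner ℝ (v - w) ξ : ℝ) • ξ) : ℝ)
          = b.repr (v - w) i := by
        rw [inner_sub_right, real_inner_smul_right, ← hb0, b.orthonormal.2 hi, mul_zero,
          sub_zero, b.repr_apply_apply]
      have habs : |b.repr (v - w) i| < ρ := by
        rw [← hinner]
        calc |(inner ℝ (b i) ((v - w) - (inner ℝ (v - w) ξ : ℝ) • ξ) : ℝ)|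
            ≤ ‖b i‖ * ‖(v - w) - (inner ℝ (v - w) ξ : ℝ) • ξ‖ := abs_real_inner_le_norm _ _
          _ = ‖(v - w) - (inner ℝ (v - w) ξ : ℝ) • ξ‖ := by rw [b.orthonormal.1 i, one_mul]
          _ < ρ := hw2
      have hmap : b.repr (v - w) i = b.repr v i - b.repr w i := by
        rw [map_sub]; rfl
      rw [hmap] at habs
      have h2 := abs_lt.mp habs
      constructor <;> [linarith [h2.2]; linarith [h2.1]]
  calc volume {w : E3 | ‖w‖ ≤ R ∧ ‖(v - w) - (inner ℝ (v - w) ξ : ℝ) • ξ‖ < ρ}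
      ≤ volume ((b.repr : E3 ≃ₗᵢ[ℝ] E3) ⁻¹'
          {x : E3 | ∀ i, x i ∈ Set.Icc (c i - r i) (c i + r i)}) := measure_mono hsub
    _ = volume {x : E3 | ∀ i, x i ∈ Set.Icc (c i - r i) (c i + r i)} := by
        rw [(b.repr : E3 ≃ₗᵢ[ℝ] E3).measurePreserving.measure_preimage
          (by
            apply MeasurableSet.nullMeasurableSet
            have : {x : E3 | ∀ i, x i ∈ Set.Icc (c i - r i) (c i + r i)}
                = ⋂ i, {x : E3 | x i ∈ Set.Icc (c i - r i) (c i + r i)} := by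
              ext x; simp
            rw [this]
            exact MeasurableSet.iInter fun i =>
              measurableSet_Icc.preimage ((measurable_pi_apply i).comp
                ((MeasurableEquiv.toLp 2 (Fin 3 → ℝ)).symm).measurable))]
    _ = ∏ i, ENNReal.ofReal (2 * r i) := box_volume c r
    _ ≤ ENNReal.ofReal (8 * R * ρ ^ 2) := by
        rw [Fin.prod_univ_three]
        simp only [hr, if_pos rfl, if_neg (show (1 : Fin 3) ≠ 0 by decide),
          if_neg (show (2 : Fin 3) ≠ 0 by decide)]
        rw [← ENNReal.ofReal_mul (by positivity), ← ENNReal.ofReal_mul (by positivity)]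
        apply ENNReal.ofReal_le_ofReal
        nlinarith [sq_nonneg ρ]

/-- Coercivity lower bound for the Landau–Coulomb diffusion matrix: for `g ≥ 0` with mass
at least `δ`, energy and entropy at most `λ`, every `v` and every unit vector `ξ`,
`∑ᵢⱼ (aᵢⱼ * g)(v) ξᵢ ξⱼ ≥ c(δ,λ) (1+|v|²)^{-3/2}`. -/
theorem stmt_4 (δ lam : ℝ) (hδ : 0 < δ) :
    ∃ c > (0 : ℝ), ∀ g : EuclideanSpace ℝ (Fin 3) → ℝ,
      Measurable g → (∀ v, 0 ≤ g v) →
      ENNReal.ofReal δ ≤ ∫⁻ v, ENNReal.ofReal (g v) →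
      (∫⁻ v, ENNReal.ofReal (g v * (1 + ‖v‖ ^ 2))) ≤ ENNReal.ofReal lam →
      (∫⁻ v, ENNReal.ofReal (g v * Real.log (1 + g v))) ≤ ENNReal.ofReal lam →
      ∀ v ξ : EuclideanSpace ℝ (Fin 3), ‖ξ‖ = 1 →
        ENNReal.ofReal (c * (1 + ‖v‖ ^ 2) ^ (-(3 : ℝ) / 2)) ≤
          ∫⁻ w, ENNReal.ofReal
            ((∑ i, ∑ j, (‖v - w‖⁻¹ * ((if i = j then (1 : ℝ) else 0) -
              (v - w) i * (v - w) j / ‖v - w‖ ^ 2)) * ξ i * ξ j) * g w) := by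
  by_cases hcase : δ ≤ lam
  swap
  · refine ⟨1, one_pos, ?_⟩
    intro g hg hg0 hmass hE _ v ξ hξ
    exfalso
    apply hcase
    have h1 : (∫⁻ v, ENNReal.ofReal (g v)) ≤ ∫⁻ v, ENNReal.ofReal (g v * (1 + ‖v‖ ^ 2)) := by
      apply lintegral_mono
      intro w
      apply ENNReal.ofReal_le_ofReal
      nlinarith [hg0 w, sq_nonneg ‖w‖]
    have h2 : ENNReal.ofReal δ ≤ ENNReal.ofReal lam := le_trans hmass (le_trans h1 hE)
    rcases le_or_gt 0 lam with hlam | hlam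
    · exact (ENNReal.ofReal_le_ofReal_iff hlam).mp h2
    · exfalso
      rw [ENNReal.ofReal_eq_zero.mpr hlam.le, nonpos_iff_eq_zero, ENNReal.ofReal_eq_zero] at h2
      linarith
  · have hlam : 0 < lam := lt_of_lt_of_le hδ hcase
    set R := Real.sqrt (2 * lam / δ) with hRdef
    have hRpos : 0 < R := Real.sqrt_pos.mpr (by positivity)
    have hR2 : R ^ 2 = 2 * lam / δ := Real.sq_sqrt (by positivity)
    set K := Real.exp (8 * lam / δ) - 1 with hKdef
    have hKpos : 0 < K := by
      have := Real.add_one_le_exp (8 * lam / δ)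
      have h8 : 0 < 8 * lam / δ := by positivity
      simp only [hKdef]
      linarith
    have hlogK : Real.log (1 + K) = 8 * lam / δ := by
      rw [show (1 : ℝ) + K = Real.exp (8 * lam / δ) by simp [hKdef]]
      exact Real.log_exp _
    set ρ := Real.sqrt (δ / (64 * K * R)) with hρdef
    have hρpos : 0 < ρ := Real.sqrt_pos.mpr (by positivity)
    have hρ2 : ρ ^ 2 = δ / (64 * K * R) := Real.sq_sqrt (by positivity)
    refine ⟨δ / 4 * ρ ^ 2 / (1 + R) ^ 3, by positivity, ?_⟩
    intro g hg hg0 hmass hE hH v ξ hξ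
    set A : Set E3 := {w : E3 | ‖w‖ ≤ R ∧ ρ ≤ ‖(v - w) - (inner ℝ (v - w) ξ : ℝ) • ξ‖} with hAdef
    have h0cont : Continuous fun w : E3 => v - w := continuous_const.sub continuous_id
    have hcont : Continuous fun w : E3 => ‖(v - w) - (inner ℝ (v - w) ξ : ℝ) • ξ‖ :=
      (h0cont.sub ((h0cont.inner (𝕜 := ℝ) continuous_const).smul continuous_const)).norm
    have hA : MeasurableSet A := by
      rw [hAdef, Set.setOf_and]
      exact (measurableSet_le continuous_norm.measurable measurable_const).inter
        (measurableSet_le measurable_const hcont.measurable)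
    have hBmeas : MeasurableSet
        {w : E3 | ‖w‖ ≤ R ∧ ‖(v - w) - (inner ℝ (v - w) ξ : ℝ) • ξ‖ < ρ} := by
      rw [Set.setOf_and]
      exact (measurableSet_le continuous_norm.measurable measurable_const).inter
        (measurableSet_lt hcont.measurable measurable_const)
    -- mass on the good set
    have hmassA : ENNReal.ofReal (δ / 4) ≤ ∫⁻ w in A, ENNReal.ofReal (g w) := by
      have hT := tail_mass g lam R hRpos hE
      have hB := small_set_mass g hg0 lam K hKpos hBmeas hH
      have hBvol := tube_volume v ξ hξ R ρ hRpos.le hρpos.le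
      have e1 : ENNReal.ofReal lam / ENNReal.ofReal (R ^ 2) = ENNReal.ofReal (δ / 2) := by
        rw [← ENNReal.ofReal_div_of_pos (by positivity)]
        congr 1
        rw [hR2]
        field_simp
      have e2 : ENNReal.ofReal lam / ENNReal.ofReal (Real.log (1 + K))
          = ENNReal.ofReal (δ / 8) := by
        rw [← ENNReal.ofReal_div_of_pos (by rw [hlogK]; positivity)]
        congr 1
        rw [hlogK]
        field_simp
      have e3 : ENNReal.ofReal K * ENNReal.ofReal (8 * R * ρ ^ 2) = ENNReal.ofReal (δ / 8) := by
        rw [← ENNReal.ofReal_mul hKpos.le]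
        congr 1
        rw [hρ2]
        field_simp
        ring
      have hcompl : Aᶜ ⊆ {w : E3 | R < ‖w‖}
          ∪ {w : E3 | ‖w‖ ≤ R ∧ ‖(v - w) - (inner ℝ (v - w) ξ : ℝ) • ξ‖ < ρ} := by
        intro w hw
        simp only [hAdef, Set.mem_compl_iff, Set.mem_setOf_eq, not_and, not_le] at hw
        by_cases h1 : ‖w‖ ≤ R
        · right; exact ⟨h1, hw h1⟩
        · left; exact lt_of_not_ge h1
      have htot : ENNReal.ofReal δ
          ≤ (∫⁻ w in A, ENNReal.ofReal (g w)) + ENNReal.ofReal (3 * δ / 4) := by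
        calc ENNReal.ofReal δ ≤ ∫⁻ w, ENNReal.ofReal (g w) := hmass
          _ = (∫⁻ w in A, ENNReal.ofReal (g w)) + ∫⁻ w in Aᶜ, ENNReal.ofReal (g w) :=
              (lintegral_add_compl _ hA).symm
          _ ≤ (∫⁻ w in A, ENNReal.ofReal (g w)) + ENNReal.ofReal (3 * δ / 4) := by
              gcongr
              calc ∫⁻ w in Aᶜ, ENNReal.ofReal (g w)
                  ≤ ∫⁻ w in {w : E3 | R < ‖w‖}
                      ∪ {w : E3 | ‖w‖ ≤ R ∧ ‖(v - w) - (inner ℝ (v - w) ξ : ℝ) • ξ‖ < ρ},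
                      ENNReal.ofReal (g w) := lintegral_mono_set hcompl
                _ ≤ (∫⁻ w in {w : E3 | R < ‖w‖}, ENNReal.ofReal (g w))
                    + ∫⁻ w in {w : E3 | ‖w‖ ≤ R ∧ ‖(v - w) - (inner ℝ (v - w) ξ : ℝ) • ξ‖ < ρ},
                      ENNReal.ofReal (g w) := lintegral_union_le _ _ _
                _ ≤ ENNReal.ofReal (δ / 2)
                    + (ENNReal.ofReal (δ / 8) + ENNReal.ofReal (δ / 8)) := by
                    gcongr
                    · exact hT.trans e1.le
                    · calc ∫⁻ w in {w : E3 | ‖w‖ ≤ R ∧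
                            ‖(v - w) - (inner ℝ (v - w) ξ : ℝ) • ξ‖ < ρ}, ENNReal.ofReal (g w)
                          ≤ ENNReal.ofReal K * volume {w : E3 | ‖w‖ ≤ R ∧
                              ‖(v - w) - (inner ℝ (v - w) ξ : ℝ) • ξ‖ < ρ}
                            + ENNReal.ofReal lam / ENNReal.ofReal (Real.log (1 + K)) := hB
                        _ ≤ ENNReal.ofReal K * ENNReal.ofReal (8 * R * ρ ^ 2)
                            + ENNReal.ofReal (δ / 8) := by
                            gcongr
                            exact e2.le
                        _ = ENNReal.ofReal (δ / 8) + ENNReal.ofReal (δ / 8) := by rw [e3]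
                _ = ENNReal.ofReal (3 * δ / 4) := by
                    rw [← ENNReal.ofReal_add (by positivity) (by positivity),
                      ← ENNReal.ofReal_add (by positivity) (by positivity)]
                    congr 1
                    ring
      have := tsub_le_iff_right.mpr htot
      calc ENNReal.ofReal (δ / 4)
          = ENNReal.ofReal δ - ENNReal.ofReal (3 * δ / 4) := by
            rw [← ENNReal.ofReal_sub _ (by positivity)]
            congr 1
            ring
        _ ≤ ∫⁻ w in A, ENNReal.ofReal (g w) := this
    -- final estimate
    set η := ρ ^ 2 / (‖v‖ + R) ^ 3 with hηdef
    have hηpos : 0 < η := by positivity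
    have hx : (0 : ℝ) < 1 + ‖v‖ ^ 2 := by positivity
    set S := Real.sqrt (1 + ‖v‖ ^ 2) with hSdef
    have hS1 : 1 ≤ S := by
      have h := Real.sqrt_le_sqrt (show (1 : ℝ) ≤ 1 + ‖v‖ ^ 2 by nlinarith [sq_nonneg ‖v‖])
      rwa [Real.sqrt_one] at h
    have hSv : ‖v‖ ≤ S := by
      have h := Real.sqrt_le_sqrt (show ‖v‖ ^ 2 ≤ 1 + ‖v‖ ^ 2 by linarith)
      rwa [Real.sqrt_sq (norm_nonneg v)] at h
    have hS3 : (1 + ‖v‖ ^ 2) ^ (-(3 : ℝ) / 2) = (S ^ 3)⁻¹ := by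
      rw [show (-(3 : ℝ) / 2) = -((1 / 2) * 3) by ring, Real.rpow_neg hx.le,
        Real.rpow_mul hx.le, ← Real.sqrt_eq_rpow,
        show ((3 : ℝ) = ((3 : ℕ) : ℝ)) by norm_num, Real.rpow_natCast]
    have hreal : δ / 4 * ρ ^ 2 / (1 + R) ^ 3 * (1 + ‖v‖ ^ 2) ^ (-(3 : ℝ) / 2)
        ≤ η * (δ / 4) := by
      rw [hS3]
      have h1 : δ / 4 * ρ ^ 2 / (1 + R) ^ 3 * (S ^ 3)⁻¹
          = (δ / 4 * ρ ^ 2) / ((1 + R) ^ 3 * S ^ 3) := by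
        rw [← div_eq_mul_inv, div_div]
      have h2 : η * (δ / 4) = (δ / 4 * ρ ^ 2) / (‖v‖ + R) ^ 3 := by
        rw [hηdef]; ring
      rw [h1, h2]
      have hvS : ‖v‖ + R ≤ (1 + R) * S := by nlinarith
      have h3 : (‖v‖ + R) ^ 3 ≤ (1 + R) ^ 3 * S ^ 3 := by
        rw [← mul_pow]
        exact pow_le_pow_left₀ (by positivity) hvS 3
      exact div_le_div_of_nonneg_left (by positivity) (by positivity) h3
    calc ENNReal.ofReal (δ / 4 * ρ ^ 2 / (1 + R) ^ 3 * (1 + ‖v‖ ^ 2) ^ (-(3 : ℝ) / 2))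
        ≤ ENNReal.ofReal (η * (δ / 4)) := ENNReal.ofReal_le_ofReal hreal
      _ = ENNReal.ofReal η * ENNReal.ofReal (δ / 4) := ENNReal.ofReal_mul hηpos.le
      _ ≤ ENNReal.ofReal η * ∫⁻ w in A, ENNReal.ofReal (g w) := by gcongr
      _ = ∫⁻ w in A, ENNReal.ofReal (η * g w) := by
          rw [← lintegral_const_mul' _ _ ENNReal.ofReal_ne_top]
          congr 1
          funext w
          rw [ENNReal.ofReal_mul hηpos.le]
      _ = ∫⁻ w, A.indicator (fun w => ENNReal.ofReal (η * g w)) w := by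
          rw [lintegral_indicator hA]
      _ ≤ ∫⁻ w, ENNReal.ofReal
            ((∑ i, ∑ j, (‖v - w‖⁻¹ * ((if i = j then (1 : ℝ) else 0) -
              (v - w) i * (v - w) j / ‖v - w‖ ^ 2)) * ξ i * ξ j) * g w) := by
          apply lintegral_mono
          intro w
          by_cases hw : w ∈ A
          · rw [Set.indicator_of_mem hw]
            apply ENNReal.ofReal_le_ofReal
            exact mul_le_mul_of_nonneg_right (quad_ge v w ξ hξ ρ R hρpos hw.1 hw.2) (hg0 w)
          · rw [Set.indicator_of_notMem hw]
            exact zero_le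
end

section
/- Let 0 < β ≤ 2 and a > 0, and define G(v)² = ∑_{ℓ=0}^∞ a^{(2/β)ℓ} ⟨v⟩^{2ℓ} / (ℓ!)^{2/β} for v ∈ ℝ³, with ⟨v⟩ = (1+|v|²)^{1/2}. Then there exist constants c_β > 0 (depending only on β) and C_{a,β} > 0 such that C_{a,β} exp((c_β a / 2) ⟨v⟩^β) ≤ G(v) ≤ C_{a,β}⁻¹ exp(c_β a ⟨v⟩^β) for all v ∈ ℝ³ — that is, G is comparable from above and below to stretched exponentials of ⟨v⟩^β. -/
open Real

lemma exp_tsum' (x : ℝ) : ∑' n : ℕ, x ^ n / (Nat.factorial n : ℝ) = Real.exp x := by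
  rw [Real.exp_eq_exp_ℝ, NormedSpace.exp_eq_tsum_div]

lemma summ (p x : ℝ) (hp : 1 ≤ p) (hx : 0 ≤ x) :
    Summable fun ℓ : ℕ => (x ^ ℓ / (Nat.factorial ℓ : ℝ)) ^ p := by
  refine Summable.of_nonneg_of_le (fun ℓ => by positivity) ?_
    (Real.summable_pow_div_factorial (x ^ p))
  · intro ℓ
    have h1 : (1:ℝ) ≤ (Nat.factorial ℓ : ℝ) := by
      exact_mod_cast Nat.one_le_iff_ne_zero.2 (Nat.factorial_ne_zero ℓ)
    have hfac : (0:ℝ) < (Nat.factorial ℓ : ℝ) := lt_of_lt_of_le one_pos h1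
    rw [Real.div_rpow (by positivity) hfac.le, ← Real.rpow_natCast x ℓ,
      ← Real.rpow_natCast (x ^ p) ℓ, ← Real.rpow_mul hx, ← Real.rpow_mul hx, mul_comm p]
    apply div_le_div_of_nonneg_left (by positivity) hfac
    calc (Nat.factorial ℓ : ℝ) = (Nat.factorial ℓ : ℝ) ^ (1:ℝ) := (Real.rpow_one _).symm
      _ ≤ (Nat.factorial ℓ : ℝ) ^ p := Real.rpow_le_rpow_of_exponent_le h1 hp

lemma upper (p x : ℝ) (hp : 1 ≤ p) (hx : 0 ≤ x) :
    ∑' ℓ : ℕ, (x ^ ℓ / (Nat.factorial ℓ : ℝ)) ^ p ≤ Real.exp x ^ p := by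
  set t : ℕ → ℝ := fun ℓ => x ^ ℓ / (Nat.factorial ℓ : ℝ) with ht
  have htsum : ∑' ℓ, t ℓ = Real.exp x := exp_tsum' x
  have hsum : Summable t := Real.summable_pow_div_factorial x
  have htnn : ∀ ℓ, 0 ≤ t ℓ := fun ℓ => by positivity
  have hT : (0:ℝ) < Real.exp x := Real.exp_pos x
  have key : ∀ ℓ, t ℓ ^ p ≤ Real.exp x ^ (p - 1) * t ℓ := by
    intro ℓ
    rcases eq_or_lt_of_le (htnn ℓ) with h | h
    · rw [← h, Real.zero_rpow (by linarith), mul_zero]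
    · have hle : t ℓ ≤ Real.exp x := htsum ▸ Summable.le_tsum hsum ℓ (fun j _ => htnn j)
      calc t ℓ ^ p = t ℓ ^ (p - 1) * t ℓ := by
            rw [Real.rpow_sub h, Real.rpow_one, div_mul_cancel₀ _ (ne_of_gt h)]
        _ ≤ Real.exp x ^ (p - 1) * t ℓ :=
            mul_le_mul_of_nonneg_right (Real.rpow_le_rpow h.le hle (by linarith)) (htnn ℓ)
  calc ∑' ℓ, t ℓ ^ p ≤ ∑' ℓ, Real.exp x ^ (p - 1) * t ℓ :=
        Summable.tsum_le_tsum key (summ p x hp hx) (hsum.mul_left _)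
    _ = Real.exp x ^ (p - 1) * Real.exp x := by rw [tsum_mul_left, htsum]
    _ = Real.exp x ^ p := by
        rw [Real.rpow_sub hT, Real.rpow_one, div_mul_cancel₀ _ (ne_of_gt hT)]

lemma lower (p x : ℝ) (hp : 1 ≤ p) (hx : 0 ≤ x) :
    (Real.exp (x / 2) / 2) ^ p ≤ ∑' ℓ : ℕ, (x ^ ℓ / (Nat.factorial ℓ : ℝ)) ^ p := by
  set t : ℕ → ℝ := fun ℓ => x ^ ℓ / (Nat.factorial ℓ : ℝ) with ht
  have htnn : ∀ ℓ, 0 ≤ t ℓ := fun ℓ => by positivity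
  have hS : 0 ≤ ∑' ℓ, t ℓ ^ p := tsum_nonneg (fun ℓ => by positivity)
  rcases eq_or_lt_of_le hp with h1 | h1
  · -- p = 1
    have : ∑' ℓ, t ℓ ^ p = Real.exp x := by
      rw [← h1]
      simp only [Real.rpow_one]
      exact exp_tsum' x
    rw [this, ← h1, Real.rpow_one]
    have h2 : Real.exp (x / 2) ≤ Real.exp x := Real.exp_le_exp.2 (by linarith)
    have h3 : Real.exp (x / 2) / 2 ≤ Real.exp (x / 2) := by
      have := Real.exp_pos (x / 2); linarith
    linarith
  · -- p > 1, Hölder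
    set q := Real.conjExponent p with hq
    have hpq : p.HolderConjugate q := Real.HolderConjugate.conjExponent h1
    have hq1 : 1 < q := hpq.symm.lt
    set g : ℕ → ℝ := fun ℓ => (1 / 2 : ℝ) ^ ℓ with hg
    have hgq : ∀ ℓ, g ℓ ^ q = (((1:ℝ)/2) ^ q) ^ ℓ := by
      intro ℓ
      simp only [hg]
      rw [← Real.rpow_natCast ((1:ℝ)/2) ℓ, ← Real.rpow_mul (by norm_num),
        ← Real.rpow_natCast (((1:ℝ)/2) ^ q) ℓ, ← Real.rpow_mul (by positivity), mul_comm]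
    have hhalf : (0:ℝ) < ((1:ℝ)/2) ^ q := by positivity
    have hhalf2 : ((1:ℝ)/2) ^ q ≤ 1/2 := by
      calc ((1:ℝ)/2) ^ q ≤ ((1:ℝ)/2) ^ (1:ℝ) :=
            Real.rpow_le_rpow_of_exponent_ge (by norm_num) (by norm_num) hq1.le
        _ = 1/2 := Real.rpow_one _
    have hgsum : Summable fun ℓ => g ℓ ^ q := by
      simp only [hgq]
      exact summable_geometric_of_lt_one hhalf.le (by linarith)
    have hgtsum : ∑' ℓ, g ℓ ^ q ≤ 2 := by
      rw [tsum_congr hgq, tsum_geometric_of_lt_one hhalf.le (by linarith)]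
      have h12 : (1:ℝ)/2 ≤ 1 - (1/2:ℝ) ^ q := by linarith
      calc (1 - ((1:ℝ)/2) ^ q)⁻¹ ≤ ((1:ℝ)/2)⁻¹ :=
            inv_anti₀ (by norm_num) h12
        _ = 2 := by norm_num
    have hfg : ∀ ℓ, t ℓ * g ℓ = (x / 2) ^ ℓ / (Nat.factorial ℓ : ℝ) := by
      intro ℓ
      simp only [ht, hg, div_pow, one_pow, div_mul_div_comm, mul_comm]
      ring
    have hholder := inner_le_Lp_mul_Lq_tsum_of_nonneg hpq htnn
      (fun ℓ => by positivity) (summ p x hp hx) hgsum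
    rw [tsum_congr hfg, exp_tsum' (x/2)] at hholder
    have hgpow : (∑' ℓ, g ℓ ^ q) ^ (1 / q) ≤ 2 := by
      calc (∑' ℓ, g ℓ ^ q) ^ (1/q) ≤ (2:ℝ) ^ (1/q) :=
            Real.rpow_le_rpow (tsum_nonneg fun ℓ => by positivity) hgtsum (by positivity)
        _ ≤ (2:ℝ) ^ (1:ℝ) := Real.rpow_le_rpow_of_exponent_le (by norm_num)
            (by rw [div_le_one (by linarith)]; linarith)
        _ = 2 := Real.rpow_one 2
    have key : Real.exp (x/2) ≤ (∑' ℓ, t ℓ ^ p) ^ (1/p) * 2 := by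
      calc Real.exp (x/2) ≤ (∑' ℓ, t ℓ ^ p) ^ (1/p) * (∑' ℓ, g ℓ ^ q) ^ (1/q) := hholder
        _ ≤ (∑' ℓ, t ℓ ^ p) ^ (1/p) * 2 :=
            mul_le_mul_of_nonneg_left hgpow (Real.rpow_nonneg hS _)
    have key2 : Real.exp (x/2) / 2 ≤ (∑' ℓ, t ℓ ^ p) ^ (1/p) := by
      rw [div_le_iff₀ (by norm_num)]; exact key
    calc (Real.exp (x/2) / 2) ^ p ≤ ((∑' ℓ, t ℓ ^ p) ^ (1/p)) ^ p :=
          Real.rpow_le_rpow (by positivity) key2 (by linarith)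
      _ = ∑' ℓ, t ℓ ^ p := by
          rw [← Real.rpow_mul hS, one_div, inv_mul_cancel₀ (by linarith), Real.rpow_one]

/-- The exponential-moment weight `G(v)² = ∑_ℓ a^{(2/β)ℓ} ⟨v⟩^{2ℓ}/(ℓ!)^{2/β}` is
comparable, from above and below, to stretched exponentials of `⟨v⟩^β`. -/
theorem stmt_12 (β : ℝ) (hβ1 : 0 < β) (hβ2 : β ≤ 2) :
    ∃ c > (0 : ℝ), ∀ a : ℝ, 0 < a → ∃ C > (0 : ℝ),
      ∀ v : EuclideanSpace ℝ (Fin 3),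
        C * Real.exp (c * a / 2 * Real.sqrt (1 + ‖v‖ ^ 2) ^ β) ≤
          Real.sqrt (∑' ℓ : ℕ, a ^ ((2 / β) * (ℓ : ℝ)) *
            Real.sqrt (1 + ‖v‖ ^ 2) ^ (2 * ℓ) / (Nat.factorial ℓ : ℝ) ^ (2 / β)) ∧
        Real.sqrt (∑' ℓ : ℕ, a ^ ((2 / β) * (ℓ : ℝ)) *
            Real.sqrt (1 + ‖v‖ ^ 2) ^ (2 * ℓ) / (Nat.factorial ℓ : ℝ) ^ (2 / β)) ≤
          C⁻¹ * Real.exp (c * a * Real.sqrt (1 + ‖v‖ ^ 2) ^ β) := by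
  have hb : β ≠ 0 := ne_of_gt hβ1
  have hp1 : (1:ℝ) ≤ 2 / β := (one_le_div hβ1).mpr hβ2
  refine ⟨1/β, by positivity, fun a ha => ?_⟩
  have hC0 : (0:ℝ) < (Real.sqrt ((2:ℝ) ^ (2/β)))⁻¹ := by
    have : (0:ℝ) < (2:ℝ) ^ (2/β) := Real.rpow_pos_of_pos (by norm_num) _
    positivity
  have h2p : (1:ℝ) ≤ Real.sqrt ((2:ℝ) ^ (2/β)) := by
    rw [show (1:ℝ) = Real.sqrt 1 from Real.sqrt_one.symm]
    refine Real.sqrt_le_sqrt ?_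
    rw [show (1:ℝ) = (2:ℝ) ^ (0:ℝ) from (Real.rpow_zero 2).symm]
    exact Real.rpow_le_rpow_of_exponent_le (by norm_num) (by positivity)
  have hC1 : (Real.sqrt ((2:ℝ) ^ (2/β)))⁻¹ ≤ 1 := by
    rw [inv_le_one_iff₀]; right; exact h2p
  refine ⟨(Real.sqrt ((2:ℝ) ^ (2/β)))⁻¹, hC0, fun v => ?_⟩
  set s : ℝ := Real.sqrt (1 + ‖v‖ ^ 2) with hsdef
  have hs0 : (0:ℝ) < s := Real.sqrt_pos.2 (by positivity)
  set x : ℝ := a * s ^ β with hxdef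
  have hx : (0:ℝ) < x := by
    have : (0:ℝ) < s ^ β := Real.rpow_pos_of_pos hs0 _
    positivity
  have hterm : ∀ ℓ : ℕ, (x ^ ℓ / (Nat.factorial ℓ : ℝ)) ^ (2/β)
      = a ^ ((2/β) * (ℓ:ℝ)) * s ^ (2*ℓ) / (Nat.factorial ℓ : ℝ) ^ (2/β) := by
    intro ℓ
    have h1 : (0:ℝ) ≤ s ^ β := (Real.rpow_pos_of_pos hs0 _).le
    rw [Real.div_rpow (by positivity) (Nat.cast_nonneg _), hxdef, mul_pow,
      Real.mul_rpow (by positivity) (by positivity),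
      ← Real.rpow_natCast a ℓ, ← Real.rpow_mul ha.le,
      ← Real.rpow_natCast (s ^ β) ℓ, ← Real.rpow_mul hs0.le, ← Real.rpow_mul hs0.le,
      ← Real.rpow_natCast s (2*ℓ)]
    rw [mul_comm ((ℓ:ℝ)) (2/β),
      show β * (ℓ:ℝ) * (2/β) = ((2*ℓ : ℕ) : ℝ) by push_cast; field_simp]
  have htsum : (∑' ℓ : ℕ, a ^ ((2 / β) * (ℓ : ℝ)) * s ^ (2 * ℓ) /
      (Nat.factorial ℓ : ℝ) ^ (2 / β))
      = ∑' ℓ : ℕ, (x ^ ℓ / (Nat.factorial ℓ : ℝ)) ^ (2/β) :=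
    tsum_congr fun ℓ => (hterm ℓ).symm
  rw [htsum]
  have hexp_sqrt : ∀ y : ℝ, Real.sqrt (Real.exp y) = Real.exp (y/2) := by
    intro y
    rw [show Real.exp y = Real.exp (y/2) ^ 2 by rw [sq, ← Real.exp_add]; ring_nf,
      Real.sqrt_sq (Real.exp_pos _).le]
  constructor
  · -- lower bound
    have hlow := lower (2/β) x hp1 hx.le
    have h2 : Real.sqrt ((Real.exp (x/2) / 2) ^ (2/β))
        ≤ Real.sqrt (∑' ℓ : ℕ, (x ^ ℓ / (Nat.factorial ℓ : ℝ)) ^ (2/β)) :=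
      Real.sqrt_le_sqrt hlow
    refine le_trans (le_of_eq ?_) h2
    rw [Real.div_rpow (Real.exp_pos _).le (by norm_num), ← Real.exp_mul,
      Real.sqrt_div (Real.exp_pos _).le, hexp_sqrt, div_eq_mul_inv, mul_comm]
    congr 2
    rw [hxdef]
    field_simp
  · -- upper bound
    have hup := upper (2/β) x hp1 hx.le
    have h2 : Real.sqrt (∑' ℓ : ℕ, (x ^ ℓ / (Nat.factorial ℓ : ℝ)) ^ (2/β))
        ≤ Real.sqrt (Real.exp x ^ (2/β)) := Real.sqrt_le_sqrt hup
    refine h2.trans ?_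
    rw [← Real.exp_mul, hexp_sqrt]
    rw [inv_inv]
    calc Real.exp (x * (2/β) / 2) = Real.exp (1/β * a * s ^ β) := by
          rw [hxdef]; congr 1; field_simp
      _ ≤ Real.sqrt ((2:ℝ) ^ (2/β)) * Real.exp (1/β * a * s ^ β) :=
          le_mul_of_one_le_left (Real.exp_pos _).le h2p
end
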